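/- Define a small-step relation on pairs (Q, g) where Q is a stack (a list of frames, each frame either a statement with cost c ≥ 1 consuming one unit of gas when executed, or a zero-cost marker) and g : ℕ is the gas; each step either pops a cost-1 frame and decrements g (requiring g ≥ 1), or expands a composite frame into finitely many frames whose total cost is strictly smaller without changing g, or pops a zero-cost marker without changing g. If the total cost of Q is strictly less than g, then every maximal execution sequence from (Q, g) is finite and never reaches a state where a cost-consuming frame is on top with g = 0. -/

import Mathlib

/-- Abstract gas semantics on stacks of frames, where a frame is represented
by its cost (`0` for zero-cost markers). A step either pops a cost-1 frame
consuming one unit of gas, expands a composite frame into finitely many frames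
of strictly smaller total cost without consuming gas, or pops a zero-cost
marker without consuming gas. -/
inductive GasStep : List ℕ × ℕ → List ℕ × ℕ → Prop
  | pop (Q : List ℕ) (g : ℕ) (hg : 1 ≤ g) :
      GasStep (1 :: Q, g) (Q, g - 1)
  | expand (c : ℕ) (Q' Q : List ℕ) (g : ℕ) (hc : 1 ≤ c) (h : Q'.sum < c) :
      GasStep (c :: Q, g) (Q' ++ Q, g)
  | marker (Q : List ℕ) (g : ℕ) :
      GasStep (0 :: Q, g) (Q, g)

/-- Measure for termination. -/
def gasMeasure (s : List ℕ × ℕ) : ℕ × ℕ × ℕ := (s.2, s.1.sum, s.1.length)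

def gasRel : ℕ × ℕ × ℕ → ℕ × ℕ × ℕ → Prop :=
  Prod.Lex (· < ·) (Prod.Lex (· < ·) (· < ·))

lemma gasRel_wf : WellFounded gasRel :=
  WellFounded.prod_lex (wellFounded_lt) (WellFounded.prod_lex wellFounded_lt wellFounded_lt)

lemma gasStep_measure {s t : List ℕ × ℕ} (h : GasStep s t) :
    gasRel (gasMeasure t) (gasMeasure s) := by
  cases h with
  | pop Q g hg =>
      exact Prod.Lex.left _ _ (by omega)
  | expand c Q' Q g hc hsum =>
      refine Prod.Lex.right _ (Prod.Lex.left _ _ ?_)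
      simp only [List.sum_append, List.sum_cons]
      omega
  | marker Q g =>
      simp only [gasMeasure, List.sum_cons, Nat.zero_add]
      exact Prod.Lex.right _ (Prod.Lex.right _ (by simp))

instance : IsStrictOrder (ℕ × ℕ × ℕ) gasRel := by
  unfold gasRel
  constructor <;> infer_instance

lemma gasStep_inv {s t : List ℕ × ℕ} (h : GasStep s t) (hs : s.1.sum < s.2) :
    t.1.sum < t.2 := by
  cases h with
  | pop Q g hg => simp_all; omega
  | expand c Q' Q g hc hsum => simp_all [List.sum_append]; omega
  | marker Q g => simp_all

/-- If the total cost of the stack is strictly below the gas, then every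
execution sequence from `(Q, g)` is finite, and no reachable state has a
cost-consuming frame on top with zero gas. -/
theorem stmt_6 (Q : List ℕ) (g : ℕ) (h : Q.sum < g) :
    (¬ ∃ f : ℕ → List ℕ × ℕ, f 0 = (Q, g) ∧ ∀ i, GasStep (f i) (f (i + 1))) ∧
    (∀ Q' g', Relation.ReflTransGen GasStep (Q, g) (Q', g') →
      ∀ c rest, Q' = c :: rest → 1 ≤ c → g' ≠ 0) := by
  constructor
  · rintro ⟨f, -, hf⟩
    exact RelEmbedding.not_wellFounded
      (RelEmbedding.natGT (fun n => gasMeasure (f n))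
        (fun n => gasStep_measure (hf n))) gasRel_wf
  · intro Q' g' hreach c rest hQ hc hg'
    have hinv : ∀ s, Relation.ReflTransGen GasStep (Q, g) s → s.1.sum < s.2 := by
      intro s hs
      induction hs with
      | refl => exact h
      | tail _ hstep ih => exact gasStep_inv hstep ih
    have := hinv (Q', g') hreach
    subst hQ hg'
    simp at this
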